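/- Let p be odd, and f(x) = (x^2 + pαx + pβ)(x^2 - pαx + pγ) with α, β, γ ∈ Z_p and p ∤ β, p ∤ γ. Suppose p^k exactly divides β - γ and p^k | α (Case 1). Then every monic quartic g ∈ Z_p[x] with g ≡ f (mod p^{2k+4}) is reducible in Z_p[x]. -/

import Mathlib

open Polynomial

namespace Stmt15Aux

/-- State of the factorization iteration: an approximate factorization
`g ≈ (x² + a x + b)(x² + c x + d)` with errors divisible by `p^m`, plus
structural invariants. -/
structure St (p : ℕ) [Fact p.Prime] (k : ℕ) (g3 g2 g1 g0 : ℤ_[p]) (m : ℕ) where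
  a : ℤ_[p]
  b : ℤ_[p]
  c : ℤ_[p]
  d : ℤ_[p]
  hc : (p : ℤ_[p]) ∣ c
  hd : (p : ℤ_[p]) ∣ d
  hu : (p : ℤ_[p]) ^ (k + 1) ∣ a - c
  hv : ∃ v1 : ℤ_[p], b - d = (p : ℤ_[p]) ^ (k + 1) * v1 ∧ ¬ (p : ℤ_[p]) ∣ v1
  he3 : (p : ℤ_[p]) ^ m ∣ g3 - (a + c)
  he2 : (p : ℤ_[p]) ^ m ∣ g2 - (b + d + a * c)
  he1 : (p : ℤ_[p]) ^ m ∣ g1 - (a * d + b * c)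
  he0 : (p : ℤ_[p]) ^ m ∣ g0 - b * d

variable {p : ℕ} [Fact p.Prime] {k : ℕ} {g3 g2 g1 g0 : ℤ_[p]}

/-- Weaken the precision of an approximate factorization. -/
def St.weaken {m m' : ℕ} (h : m' ≤ m) (s : St p k g3 g2 g1 g0 m) :
    St p k g3 g2 g1 g0 m' :=
  { s with
    he3 := (pow_dvd_pow _ h).trans s.he3
    he2 := (pow_dvd_pow _ h).trans s.he2
    he1 := (pow_dvd_pow _ h).trans s.he1
    he0 := (pow_dvd_pow _ h).trans s.he0 }

/-- The key Newton step: improve the precision of an approximate factorization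
from `p^(k+1+j)` to `p^(k+1+j')` where `k+1+j' ≤ 2j`, moving the factorization
by elements divisible by `p^j`. -/
theorem step {j j' : ℕ} (hj : k + 2 ≤ j) (hj' : k + 1 + j' ≤ 2 * j)
    (s : St p k g3 g2 g1 g0 (k + 1 + j)) :
    ∃ s' : St p k g3 g2 g1 g0 (k + 1 + j'),
      (p : ℤ_[p]) ^ j ∣ s'.a - s.a ∧ (p : ℤ_[p]) ^ j ∣ s'.b - s.b ∧
        (p : ℤ_[p]) ^ j ∣ s'.c - s.c ∧ (p : ℤ_[p]) ^ j ∣ s'.d - s.d := by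
  obtain ⟨a, b, c, d, hc, hd, hu, hv, he3, he2, he1, he0⟩ := s
  obtain ⟨v1, hv1, hv1u⟩ := hv
  obtain ⟨u1, hu1⟩ := hu
  have hπp : Prime (p : ℤ_[p]) := PadicInt.prime_p
  have hπ0 : (p : ℤ_[p]) ≠ 0 := hπp.ne_zero
  -- the unit part of the resultant
  have hρnd : ¬ (p : ℤ_[p]) ∣ (v1 ^ 2 - c * u1 * v1 + d * u1 ^ 2) := by
    intro hdvd
    have h1 : (p : ℤ_[p]) ∣ v1 * v1 := by
      have hrw : v1 * v1 =
          (v1 ^ 2 - c * u1 * v1 + d * u1 ^ 2) + c * (u1 * v1) - d * (u1 * u1) := by ring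
      rw [hrw]
      exact dvd_sub (dvd_add hdvd (hc.mul_right _)) (hd.mul_right _)
    exact hv1u ((hπp.dvd_mul.mp h1).elim id id)
  have hρu : IsUnit (v1 ^ 2 - c * u1 * v1 + d * u1 ^ 2) := by
    refine PadicInt.isUnit_iff.mpr (le_antisymm (PadicInt.norm_le_one _) (not_lt.mp ?_))
    intro hlt
    exact hρnd ((PadicInt.norm_lt_one_iff_dvd _).mp hlt)
  have hRes : (b - d) ^ 2 - c * (a - c) * (b - d) + d * (a - c) ^ 2 =
      (p : ℤ_[p]) ^ (2 * (k + 1)) * (v1 ^ 2 - c * u1 * v1 + d * u1 ^ 2) := by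
    rw [hv1, hu1]; ring
  have hResne : (b - d) ^ 2 - c * (a - c) * (b - d) + d * (a - c) ^ 2 ≠ 0 := by
    rw [hRes]
    refine mul_ne_zero (pow_ne_zero _ hπ0) (fun h0 => hρnd ?_)
    rw [h0]
    exact dvd_zero _
  -- witnesses for the errors
  obtain ⟨E3, hE3⟩ := he3
  obtain ⟨E2, hE2⟩ := he2
  obtain ⟨E1, hE1⟩ := he1
  obtain ⟨E0, hE0⟩ := he0
  -- the numerators are divisible by the resultant
  have hNc : ((g1 - (a * d + b * c)) - c * (g2 - (b + d + a * c))
        + (c ^ 2 - d) * (g3 - (a + c))) * (b - d)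
      - (a - c) * ((g0 - b * d) - d * (g2 - (b + d + a * c)) + c * d * (g3 - (a + c))) =
      (p : ℤ_[p]) ^ (2 * (k + 1)) *
        ((p : ℤ_[p]) ^ j *
          ((E1 - c * E2 + (c ^ 2 - d) * E3) * v1 - u1 * (E0 - d * E2 + c * d * E3))) := by
    rw [hE0, hE1, hE2, hE3, hv1, hu1]; ring
  have hNd : ((g0 - b * d) - d * (g2 - (b + d + a * c)) + c * d * (g3 - (a + c)))
        * ((b - d) - c * (a - c))
      + d * (a - c) * ((g1 - (a * d + b * c)) - c * (g2 - (b + d + a * c))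
        + (c ^ 2 - d) * (g3 - (a + c))) =
      (p : ℤ_[p]) ^ (2 * (k + 1)) *
        ((p : ℤ_[p]) ^ j *
          ((E0 - d * E2 + c * d * E3) * (v1 - c * u1)
            + d * u1 * (E1 - c * E2 + (c ^ 2 - d) * E3))) := by
    rw [hE0, hE1, hE2, hE3, hv1, hu1]; ring
  -- solve for the corrections δc, δd
  have hdvdNc : ((b - d) ^ 2 - c * (a - c) * (b - d) + d * (a - c) ^ 2) ∣
      ((g1 - (a * d + b * c)) - c * (g2 - (b + d + a * c))
        + (c ^ 2 - d) * (g3 - (a + c))) * (b - d)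
      - (a - c) * ((g0 - b * d) - d * (g2 - (b + d + a * c)) + c * d * (g3 - (a + c))) := by
    rw [hRes, hNc]
    exact mul_dvd_mul_left _ hρu.dvd
  have hdvdNd : ((b - d) ^ 2 - c * (a - c) * (b - d) + d * (a - c) ^ 2) ∣
      ((g0 - b * d) - d * (g2 - (b + d + a * c)) + c * d * (g3 - (a + c)))
        * ((b - d) - c * (a - c))
      + d * (a - c) * ((g1 - (a * d + b * c)) - c * (g2 - (b + d + a * c))
        + (c ^ 2 - d) * (g3 - (a + c))) := by
    rw [hRes, hNd]
    exact mul_dvd_mul_left _ hρu.dvd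
  obtain ⟨δc, hδc⟩ := hdvdNc
  obtain ⟨δd, hδd⟩ := hdvdNd
  -- δc, δd are divisible by p^j
  have hunit_cancel : ∀ δ W : ℤ_[p],
      (p : ℤ_[p]) ^ (2 * (k + 1)) * ((p : ℤ_[p]) ^ j * W) =
        ((b - d) ^ 2 - c * (a - c) * (b - d) + d * (a - c) ^ 2) * δ →
      (p : ℤ_[p]) ^ j ∣ δ := by
    intro δ W heq
    rw [hRes, mul_assoc] at heq
    have h1 : (p : ℤ_[p]) ^ j * W = (v1 ^ 2 - c * u1 * v1 + d * u1 ^ 2) * δ :=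
      mul_left_cancel₀ (pow_ne_zero _ hπ0) heq
    obtain ⟨ε, hε⟩ := hρu
    refine ⟨(↑ε⁻¹ : ℤ_[p]) * W, ?_⟩
    have hεinv : (↑ε⁻¹ : ℤ_[p]) * (v1 ^ 2 - c * u1 * v1 + d * u1 ^ 2) = 1 := by
      rw [← hε]; exact ε.inv_mul
    calc δ = ((↑ε⁻¹ : ℤ_[p]) * (v1 ^ 2 - c * u1 * v1 + d * u1 ^ 2)) * δ := by
            rw [hεinv, one_mul]
      _ = (↑ε⁻¹ : ℤ_[p]) * ((v1 ^ 2 - c * u1 * v1 + d * u1 ^ 2) * δ) := by ring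
      _ = (↑ε⁻¹ : ℤ_[p]) * ((p : ℤ_[p]) ^ j * W) := by rw [← h1]
      _ = (p : ℤ_[p]) ^ j * ((↑ε⁻¹ : ℤ_[p]) * W) := by ring
  have hδcj : (p : ℤ_[p]) ^ j ∣ δc := hunit_cancel δc _ (hNc.symm.trans hδc)
  have hδdj : (p : ℤ_[p]) ^ j ∣ δd := hunit_cancel δd _ (hNd.symm.trans hδd)
  -- the corrections δa, δb
  set δa : ℤ_[p] := (g3 - (a + c)) - δc with hδadef
  set δb : ℤ_[p] := (g2 - (b + d + a * c)) - c * (g3 - (a + c)) - (a - c) * δc - δd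
    with hδbdef
  have hδaj : (p : ℤ_[p]) ^ j ∣ δa :=
    dvd_sub ((pow_dvd_pow _ (Nat.le_add_left j (k + 1))).trans ⟨E3, hE3⟩) hδcj
  have hδbj : (p : ℤ_[p]) ^ j ∣ δb := by
    refine dvd_sub (dvd_sub (dvd_sub ?_ ?_) (hδcj.mul_left _)) hδdj
    · exact (pow_dvd_pow _ (Nat.le_add_left j (k + 1))).trans ⟨E2, hE2⟩
    · exact ((pow_dvd_pow _ (Nat.le_add_left j (k + 1))).trans ⟨E3, hE3⟩).mul_left c
  have hjdvd : ∀ x : ℤ_[p], (p : ℤ_[p]) ^ j ∣ x → (p : ℤ_[p]) ∣ x := fun x hx =>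
    (dvd_pow_self (p : ℤ_[p]) (by omega : j ≠ 0)).trans hx
  have hk1dvd : ∀ x : ℤ_[p], (p : ℤ_[p]) ^ j ∣ x → (p : ℤ_[p]) ^ (k + 1) ∣ x := fun x hx =>
    (pow_dvd_pow _ (by omega : k + 1 ≤ j)).trans hx
  have hk2dvd : ∀ x : ℤ_[p], (p : ℤ_[p]) ^ j ∣ x → (p : ℤ_[p]) ^ (k + 2) ∣ x := fun x hx =>
    (pow_dvd_pow _ hj).trans hx
  -- product of two p^j-divisible elements is divisible by p^(k+1+j')
  have hprod : ∀ x y : ℤ_[p], (p : ℤ_[p]) ^ j ∣ x → (p : ℤ_[p]) ^ j ∣ y →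
      (p : ℤ_[p]) ^ (k + 1 + j') ∣ x * y := by
    intro x y hx hy
    refine (pow_dvd_pow _ hj').trans ?_
    rw [two_mul, pow_add]
    exact mul_dvd_mul hx hy
  -- new error identities
  have hid3 : g3 - ((a + δa) + (c + δc)) = 0 := by rw [hδadef]; ring
  have hid2 : g2 - ((b + δb) + (d + δd) + (a + δa) * (c + δc)) = -(δa * δc) := by
    rw [hδadef, hδbdef]; ring
  have key1 : ((b - d) ^ 2 - c * (a - c) * (b - d) + d * (a - c) ^ 2) *
      (g1 - ((a + δa) * (d + δd) + (b + δb) * (c + δc)) + (δa * δd + δb * δc)) = 0 := by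
    rw [hδadef, hδbdef]
    linear_combination ((b - d) - c * (a - c)) * hδc + (a - c) * hδd
  have hid1 : g1 - ((a + δa) * (d + δd) + (b + δb) * (c + δc)) = -(δa * δd + δb * δc) := by
    have h := (mul_eq_zero.mp key1).resolve_left hResne
    linear_combination h
  have key0 : ((b - d) ^ 2 - c * (a - c) * (b - d) + d * (a - c) ^ 2) *
      (g0 - (b + δb) * (d + δd) + δb * δd) = 0 := by
    rw [hδbdef]
    linear_combination (-(d * (a - c))) * hδc + (b - d) * hδd
  have hid0 : g0 - (b + δb) * (d + δd) = -(δb * δd) := by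
    have h := (mul_eq_zero.mp key0).resolve_left hResne
    linear_combination h
  -- the new invariant fields
  obtain ⟨w, hw⟩ : (p : ℤ_[p]) ^ (k + 2) ∣ δb - δd :=
    hk2dvd _ (dvd_sub hδbj hδdj)
  refine ⟨⟨a + δa, b + δb, c + δc, d + δd,
      dvd_add hc (hjdvd _ hδcj), dvd_add hd (hjdvd _ hδdj), ?_, ?_, ?_, ?_, ?_, ?_⟩,
      ?_, ?_, ?_, ?_⟩
  · have hrw : (a + δa) - (c + δc) = (a - c) + (δa - δc) := by ring
    rw [hrw]
    exact dvd_add ⟨u1, hu1⟩ (dvd_sub (hk1dvd _ hδaj) (hk1dvd _ hδcj))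
  · refine ⟨v1 + (p : ℤ_[p]) * w, ?_, ?_⟩
    · have hrw : (b + δb) - (d + δd) = (b - d) + (δb - δd) := by ring
      rw [hrw, hv1, hw]; ring
    · intro hdd
      refine hv1u ?_
      have hrw : v1 = (v1 + (p : ℤ_[p]) * w) - (p : ℤ_[p]) * w := by ring
      rw [hrw]
      exact dvd_sub hdd (dvd_mul_right _ _)
  · rw [hid3]; exact dvd_zero _
  · rw [hid2]; exact dvd_neg.mpr (hprod _ _ hδaj hδcj)
  · rw [hid1]
    exact dvd_neg.mpr (dvd_add (hprod _ _ hδaj hδdj) (hprod _ _ hδbj hδcj))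
  · rw [hid0]; exact dvd_neg.mpr (hprod _ _ hδbj hδdj)
  · simpa using hδaj
  · simpa using hδbj
  · simpa using hδcj
  · simpa using hδdj

/-- The step lemma specialized to the exponent sequence `m n = k+1+(k+1+2^(n+1))`. -/
theorem step' (n : ℕ) (s : St p k g3 g2 g1 g0 (k + 1 + (k + 1 + 2 ^ (n + 1)))) :
    ∃ s' : St p k g3 g2 g1 g0 (k + 1 + (k + 1 + 2 ^ (n + 1 + 1))),
      (p : ℤ_[p]) ^ (k + 1 + 2 ^ (n + 1)) ∣ s'.a - s.a ∧
        (p : ℤ_[p]) ^ (k + 1 + 2 ^ (n + 1)) ∣ s'.b - s.b ∧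
        (p : ℤ_[p]) ^ (k + 1 + 2 ^ (n + 1)) ∣ s'.c - s.c ∧
        (p : ℤ_[p]) ^ (k + 1 + 2 ^ (n + 1)) ∣ s'.d - s.d := by
  have h1 : 0 < 2 ^ (n + 1) := pow_pos (by norm_num) _
  have h2 : (2 : ℕ) ^ (n + 1 + 1) = 2 ^ (n + 1) + 2 ^ (n + 1) := by
    rw [pow_succ]; ring
  exact step (by omega) (by omega) s

/-- The iterated sequence of approximate factorizations. -/
noncomputable def seqSt (init : St p k g3 g2 g1 g0 (k + 1 + (k + 1 + 2 ^ (0 + 1)))) :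
    (n : ℕ) → St p k g3 g2 g1 g0 (k + 1 + (k + 1 + 2 ^ (n + 1)))
  | 0 => init
  | n + 1 => (step' n (seqSt init n)).choose

theorem seqSt_spec (init : St p k g3 g2 g1 g0 (k + 1 + (k + 1 + 2 ^ (0 + 1)))) (n : ℕ) :
    (p : ℤ_[p]) ^ (k + 1 + 2 ^ (n + 1)) ∣ (seqSt init (n + 1)).a - (seqSt init n).a ∧
      (p : ℤ_[p]) ^ (k + 1 + 2 ^ (n + 1)) ∣ (seqSt init (n + 1)).b - (seqSt init n).b ∧
      (p : ℤ_[p]) ^ (k + 1 + 2 ^ (n + 1)) ∣ (seqSt init (n + 1)).c - (seqSt init n).c ∧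
      (p : ℤ_[p]) ^ (k + 1 + 2 ^ (n + 1)) ∣ (seqSt init (n + 1)).d - (seqSt init n).d :=
  (step' n (seqSt init n)).choose_spec

theorem dvd_norm_le {x : ℤ_[p]} {n : ℕ} (h : (p : ℤ_[p]) ^ n ∣ x) :
    ‖x‖ ≤ (p : ℝ) ^ (-(n : ℤ)) :=
  (PadicInt.norm_le_pow_iff_mem_span_pow x n).mpr (Ideal.mem_span_singleton.mpr h)

theorem hp_one_lt : (1 : ℝ) < (p : ℝ) := by
  exact_mod_cast (Fact.out : p.Prime).one_lt

theorem tendsto_zero_of_dvd {x : ℕ → ℤ_[p]} {m : ℕ → ℕ} (hm : ∀ n, n ≤ m n)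
    (h : ∀ n, (p : ℤ_[p]) ^ (m n) ∣ x n) :
    Filter.Tendsto x Filter.atTop (nhds 0) := by
  have hp1 : (1 : ℝ) < (p : ℝ) := hp_one_lt
  apply squeeze_zero_norm (a := fun n => ((p : ℝ)⁻¹) ^ n)
  · intro n
    calc ‖x n‖ ≤ (p : ℝ) ^ (-(m n : ℤ)) := dvd_norm_le (h n)
      _ ≤ (p : ℝ) ^ (-(n : ℤ)) := by
          apply zpow_le_zpow_right₀ hp1.le
          exact_mod_cast neg_le_neg (Int.ofNat_le.mpr (hm n))
      _ = ((p : ℝ)⁻¹) ^ n := by rw [zpow_neg, zpow_natCast, inv_pow]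
  · exact tendsto_pow_atTop_nhds_zero_of_lt_one (by positivity) (inv_lt_one_of_one_lt₀ hp1)

theorem cauchy_of_dvd {x : ℕ → ℤ_[p]} (h : ∀ n, (p : ℤ_[p]) ^ (n + 1) ∣ x (n + 1) - x n) :
    CauchySeq x := by
  have hp1 : (1 : ℝ) < (p : ℝ) := hp_one_lt
  apply cauchySeq_of_le_geometric ((p : ℝ)⁻¹) 1 (inv_lt_one_of_one_lt₀ hp1)
  intro n
  rw [dist_eq_norm]
  calc ‖x n - x (n + 1)‖ = ‖x (n + 1) - x n‖ := norm_sub_rev _ _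
    _ ≤ (p : ℝ) ^ (-((n + 1 : ℕ) : ℤ)) := dvd_norm_le (h n)
    _ ≤ (p : ℝ) ^ (-(n : ℤ)) := by
        apply zpow_le_zpow_right₀ hp1.le
        omega
    _ = 1 * ((p : ℝ)⁻¹) ^ n := by rw [one_mul, zpow_neg, zpow_natCast, inv_pow]

theorem n_le_exp (n : ℕ) : n + 1 ≤ k + 1 + 2 ^ (n + 1) := by
  have h1 : n < 2 ^ n := Nat.lt_two_pow_self (n := n)
  have h2 : 2 ^ n ≤ 2 ^ (n + 1) := Nat.pow_le_pow_right (by norm_num) (by omega)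
  omega

/-- From an initial approximate factorization, obtain an exact factorization. -/
theorem exists_factorization (init : St p k g3 g2 g1 g0 (k + 1 + (k + 1 + 2 ^ (0 + 1)))) :
    ∃ a b c d : ℤ_[p],
      g3 = a + c ∧ g2 = b + d + a * c ∧ g1 = a * d + b * c ∧ g0 = b * d := by
  set F := seqSt init with hF
  have hmono : ∀ n, n ≤ k + 1 + (k + 1 + 2 ^ (n + 1)) := by
    intro n
    have := n_le_exp (k := k) n
    omega
  have hcauchy : ∀ (f : ℕ → ℤ_[p]),
      (∀ n, (p : ℤ_[p]) ^ (k + 1 + 2 ^ (n + 1)) ∣ f (n + 1) - f n) → CauchySeq f := by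
    intro f hf
    apply cauchy_of_dvd
    intro n
    exact (pow_dvd_pow _ (n_le_exp n)).trans (hf n)
  have hca : CauchySeq (fun n => (F n).a) := hcauchy _ (fun n => (seqSt_spec init n).1)
  have hcb : CauchySeq (fun n => (F n).b) := hcauchy _ (fun n => (seqSt_spec init n).2.1)
  have hcc : CauchySeq (fun n => (F n).c) := hcauchy _ (fun n => (seqSt_spec init n).2.2.1)
  have hcd : CauchySeq (fun n => (F n).d) := hcauchy _ (fun n => (seqSt_spec init n).2.2.2)
  obtain ⟨A, hA⟩ := cauchySeq_tendsto_of_complete hca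
  obtain ⟨B, hB⟩ := cauchySeq_tendsto_of_complete hcb
  obtain ⟨C', hC⟩ := cauchySeq_tendsto_of_complete hcc
  obtain ⟨D, hD⟩ := cauchySeq_tendsto_of_complete hcd
  refine ⟨A, B, C', D, ?_, ?_, ?_, ?_⟩
  · have h1 : Filter.Tendsto (fun n => g3 - ((F n).a + (F n).c)) Filter.atTop
        (nhds (g3 - (A + C'))) := tendsto_const_nhds.sub (hA.add hC)
    have h2 : Filter.Tendsto (fun n => g3 - ((F n).a + (F n).c)) Filter.atTop (nhds 0) :=
      tendsto_zero_of_dvd hmono (fun n => (F n).he3)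
    have := tendsto_nhds_unique h1 h2
    exact sub_eq_zero.mp this
  · have h1 : Filter.Tendsto (fun n => g2 - ((F n).b + (F n).d + (F n).a * (F n).c))
        Filter.atTop (nhds (g2 - (B + D + A * C'))) :=
      tendsto_const_nhds.sub ((hB.add hD).add (hA.mul hC))
    have h2 : Filter.Tendsto (fun n => g2 - ((F n).b + (F n).d + (F n).a * (F n).c))
        Filter.atTop (nhds 0) := tendsto_zero_of_dvd hmono (fun n => (F n).he2)
    have := tendsto_nhds_unique h1 h2
    exact sub_eq_zero.mp this
  · have h1 : Filter.Tendsto (fun n => g1 - ((F n).a * (F n).d + (F n).b * (F n).c))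
        Filter.atTop (nhds (g1 - (A * D + B * C'))) :=
      tendsto_const_nhds.sub ((hA.mul hD).add (hB.mul hC))
    have h2 : Filter.Tendsto (fun n => g1 - ((F n).a * (F n).d + (F n).b * (F n).c))
        Filter.atTop (nhds 0) := tendsto_zero_of_dvd hmono (fun n => (F n).he1)
    have := tendsto_nhds_unique h1 h2
    exact sub_eq_zero.mp this
  · have h1 : Filter.Tendsto (fun n => g0 - (F n).b * (F n).d)
        Filter.atTop (nhds (g0 - B * D)) := tendsto_const_nhds.sub (hB.mul hD)
    have h2 : Filter.Tendsto (fun n => g0 - (F n).b * (F n).d)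
        Filter.atTop (nhds 0) := tendsto_zero_of_dvd hmono (fun n => (F n).he0)
    have := tendsto_nhds_unique h1 h2
    exact sub_eq_zero.mp this

end Stmt15Aux

open Stmt15Aux in
/-- Claim 3, Case 1: with `f = (x² + pαx + pβ)(x² - pαx + pγ)`, `p ∤ β`, `p ∤ γ`,
`p^k` exactly dividing `β - γ` and `p^k ∣ α`, every monic quartic
`g ≡ f (mod p^(2k+4))` is reducible in `ℤ_p[x]`. -/
theorem stmt_15 (p : ℕ) [Fact p.Prime] (hodd : p ≠ 2) (α β γ : ℤ_[p]) (k : ℕ)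
    (hβ : ¬ (p : ℤ_[p]) ∣ β) (hγ : ¬ (p : ℤ_[p]) ∣ γ)
    (hdiff : (p : ℤ_[p]) ^ k ∣ (β - γ)) (hdiff' : ¬ (p : ℤ_[p]) ^ (k + 1) ∣ (β - γ))
    (hα : (p : ℤ_[p]) ^ k ∣ α) :
    ∀ g : Polynomial ℤ_[p], g.Monic → g.natDegree = 4 →
      g.map (PadicInt.toZModPow (2 * k + 4)) =
        ((X ^ 2 + C ((p : ℤ_[p]) * α) * X + C ((p : ℤ_[p]) * β)) *
          (X ^ 2 - C ((p : ℤ_[p]) * α) * X + C ((p : ℤ_[p]) * γ))).map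
            (PadicInt.toZModPow (2 * k + 4)) →
      ¬ Irreducible g := by
  intro g hmon hdeg hmap
  set π : ℤ_[p] := (p : ℤ_[p]) with hπdef
  -- coefficient congruences
  have hcoeff : ∀ i, π ^ (2 * k + 4) ∣ g.coeff i -
      ((X ^ 2 + C (π * α) * X + C (π * β)) *
        (X ^ 2 - C (π * α) * X + C (π * γ))).coeff i := by
    intro i
    have h1 : (PadicInt.toZModPow (2 * k + 4)) (g.coeff i -
        ((X ^ 2 + C (π * α) * X + C (π * β)) *
          (X ^ 2 - C (π * α) * X + C (π * γ))).coeff i) = 0 := by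
      rw [map_sub, sub_eq_zero, ← Polynomial.coeff_map, ← Polynomial.coeff_map, hmap]
    have h3 : g.coeff i - ((X ^ 2 + C (π * α) * X + C (π * β)) *
        (X ^ 2 - C (π * α) * X + C (π * γ))).coeff i ∈
        RingHom.ker (PadicInt.toZModPow (p := p) (2 * k + 4)) := h1
    rw [PadicInt.ker_toZModPow, Ideal.mem_span_singleton] at h3
    exact h3
  -- the coefficients of the model polynomial
  have hf : (X ^ 2 + C (π * α) * X + C (π * β)) *
      (X ^ 2 - C (π * α) * X + C (π * γ)) =
      X ^ 4 + C (π * β + π * γ - (π * α) * (π * α)) * X ^ 2 +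
        C ((π * α) * (π * γ) - (π * β) * (π * α)) * X + C ((π * β) * (π * γ)) := by
    simp only [map_add, map_sub, map_mul]
    ring
  have hf3 : ((X ^ 2 + C (π * α) * X + C (π * β)) *
      (X ^ 2 - C (π * α) * X + C (π * γ))).coeff 3 = 0 := by
    rw [hf]
    simp only [coeff_add, coeff_sub, coeff_C_mul, coeff_X_pow, coeff_C, coeff_X]
    norm_num
  have hf2 : ((X ^ 2 + C (π * α) * X + C (π * β)) *
      (X ^ 2 - C (π * α) * X + C (π * γ))).coeff 2 =
      π * β + π * γ - (π * α) * (π * α) := by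
    rw [hf]
    simp only [coeff_add, coeff_sub, coeff_C_mul, coeff_X_pow, coeff_C, coeff_X]
    norm_num
  have hf1 : ((X ^ 2 + C (π * α) * X + C (π * β)) *
      (X ^ 2 - C (π * α) * X + C (π * γ))).coeff 1 =
      (π * α) * (π * γ) - (π * β) * (π * α) := by
    rw [hf]
    simp only [coeff_add, coeff_sub, coeff_C_mul, coeff_X_pow, coeff_C, coeff_X]
    norm_num
  have hf0 : ((X ^ 2 + C (π * α) * X + C (π * β)) *
      (X ^ 2 - C (π * α) * X + C (π * γ))).coeff 0 =
      (π * β) * (π * γ) := by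
    rw [hf]
    simp only [coeff_add, coeff_sub, coeff_C_mul, coeff_X_pow, coeff_C, coeff_X]
    norm_num
  -- build the initial approximate factorization
  obtain ⟨α', hα'⟩ := hα
  obtain ⟨w1, hw1⟩ := hdiff
  have hw1u : ¬ π ∣ w1 := by
    intro hd
    refine hdiff' ?_
    rw [hw1, pow_succ]
    exact mul_dvd_mul_left _ hd
  have init0 : St p k (g.coeff 3) (g.coeff 2) (g.coeff 1) (g.coeff 0) (2 * k + 4) := by
    refine ⟨π * α, π * β, -(π * α), π * γ, dvd_neg.mpr (dvd_mul_right _ _),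
        dvd_mul_right _ _, ?_, ⟨w1, ?_, hw1u⟩, ?_, ?_, ?_, ?_⟩
    · refine ⟨2 * α', ?_⟩
      have : π * α - -(π * α) = 2 * (π * α) := by ring
      rw [this, hα']; ring
    · have : π * β - π * γ = π * (β - γ) := by ring
      rw [this, hw1]; ring
    · have h := hcoeff 3
      rw [hf3] at h
      simpa using h
    · have h := hcoeff 2
      rw [hf2] at h
      have hrw : g.coeff 2 - (π * β + π * γ + π * α * -(π * α)) =
          g.coeff 2 - (π * β + π * γ - π * α * (π * α)) := by ring
      rw [hrw]
      exact h
    · have h := hcoeff 1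
      rw [hf1] at h
      have hrw : g.coeff 1 - (π * α * (π * γ) + π * β * -(π * α)) =
          g.coeff 1 - (π * α * (π * γ) - π * β * (π * α)) := by ring
      rw [hrw]
      exact h
    · have h := hcoeff 0
      rw [hf0] at h
      exact h
  have hle : k + 1 + (k + 1 + 2 ^ (0 + 1)) ≤ 2 * k + 4 := by norm_num; omega
  obtain ⟨a, b, c, d, h3, h2, h1, h0⟩ := exists_factorization (init0.weaken hle)
  -- assemble the factorization of g
  have hgeq : g = (X ^ 2 + C a * X + C b) * (X ^ 2 + C c * X + C d) := by
    have hsum := hmon.as_sum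
    rw [hdeg] at hsum
    rw [hsum, Finset.sum_range_succ, Finset.sum_range_succ, Finset.sum_range_succ,
      Finset.sum_range_one]
    rw [h3, h2, h1, h0]
    simp only [map_add, map_mul]
    ring
  intro hirr
  have hdeg2 : ∀ u v : ℤ_[p], (X ^ 2 + C u * X + C v : ℤ_[p][X]).natDegree = 2 := by
    intro u v
    have : (X ^ 2 + C u * X + C v : ℤ_[p][X]) = C 1 * X ^ 2 + C u * X + C v := by
      simp
    rw [this]
    exact natDegree_quadratic one_ne_zero
  rcases hirr.isUnit_or_isUnit hgeq with hA | hB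
  · have := natDegree_eq_zero_of_isUnit hA
    rw [hdeg2] at this
    exact two_ne_zero this
  · have := natDegree_eq_zero_of_isUnit hB
    rw [hdeg2] at this
    exact two_ne_zero this
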